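/- Let b, c, m, μ, λ be positive real numbers with 0 < mλ − b < bμ/c. Define A = λ(2cm² + b) − mb(μ + 2c), Δ₁ = A² + 4(b + cm²)[b(μ + c) − mcλ](mλ − b), u* = (A + √Δ₁)/(2(b + cm²)) and v* = u*(λ − u*)/(b − m(λ − u*)). Then u* > 0, b − m(λ − u*) > 0, v* > 0, and the pair (u*, v*) satisfies the system λ − u* − b v*/(u* + m v*) = 0 and μ − v* + c u*/(u* + m v*) = 0. -/

import Mathlib

set_option maxHeartbeats 2000000 in
/-- the positive constant equilibrium of the ratio-dependent
predator-prey reaction terms. -/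
theorem stmt_0 (b c m μ lam A Δ₁ ustar vstar : ℝ)
    (hb : 0 < b) (hc : 0 < c) (hm : 0 < m) (hμ : 0 < μ) (hlam : 0 < lam)
    (h1 : 0 < m * lam - b) (h2 : m * lam - b < b * μ / c)
    (hA : A = lam * (2 * c * m ^ 2 + b) - m * b * (μ + 2 * c))
    (hΔ : Δ₁ = A ^ 2 + 4 * (b + c * m ^ 2) * (b * (μ + c) - m * c * lam) * (m * lam - b))
    (hu : ustar = (A + Real.sqrt Δ₁) / (2 * (b + c * m ^ 2)))
    (hv : vstar = ustar * (lam - ustar) / (b - m * (lam - ustar))) :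
    0 < ustar ∧ 0 < b - m * (lam - ustar) ∧ 0 < vstar ∧
      lam - ustar - b * vstar / (ustar + m * vstar) = 0 ∧
      μ - vstar + c * ustar / (ustar + m * vstar) = 0 := by
  have hq : 0 < b + c * m ^ 2 := by positivity
  have h2' : (m * lam - b) * c < b * μ := (lt_div_iff₀ hc).mp h2
  have hK : 0 < b * (μ + c) - m * c * lam := by nlinarith
  have hΔnn : 0 ≤ Δ₁ := by
    rw [hΔ]; nlinarith [sq_nonneg A, mul_pos (mul_pos hq hK) h1]
  set S := Real.sqrt Δ₁ with hS
  have hSnn : 0 ≤ S := Real.sqrt_nonneg _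
  have hS2 : S ^ 2 = Δ₁ := Real.sq_sqrt hΔnn
  have hΔA : A ^ 2 < Δ₁ := by
    rw [hΔ]; nlinarith [mul_pos (mul_pos hq hK) h1]
  have hAS : A < S := by nlinarith [hS2, hSnn]
  have hApS : 0 < A + S := by nlinarith [hS2, hSnn]
  have h2qu : 2 * (b + c * m ^ 2) * ustar = A + S := by
    rw [hu]; field_simp
  have hquad4 : 4 * (b + c * m ^ 2) *
      ((b + c * m ^ 2) * ustar ^ 2 - A * ustar
        - (b * (μ + c) - m * c * lam) * (m * lam - b)) = 0 := by
    have h' : Δ₁ = A ^ 2 + 4 * (b + c * m ^ 2) * (b * (μ + c) - m * c * lam) * (m * lam - b) := hΔ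
    linear_combination (2 * (b + c * m ^ 2) * ustar - A + S) * h2qu + hS2 + h'
  have hquad : (b + c * m ^ 2) * ustar ^ 2 - A * ustar
      - (b * (μ + c) - m * c * lam) * (m * lam - b) = 0 := by
    have hne : (4 * (b + c * m ^ 2)) ≠ 0 := by positivity
    exact (mul_eq_zero.mp hquad4).resolve_left hne
  have hupos : 0 < ustar := by
    rw [hu]; exact div_pos hApS (by positivity)
  -- ustar < lam
  have hBpos : 0 < 2 * (b + c * m ^ 2) * lam - A := by
    rw [hA]; nlinarith [mul_pos hb hlam, mul_pos (mul_pos hm hb) hμ, mul_pos (mul_pos hm hb) hc]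
  have hB2 : Δ₁ < (2 * (b + c * m ^ 2) * lam - A) ^ 2 := by
    have hid : (2 * (b + c * m ^ 2) * lam - A) ^ 2 - Δ₁
        = 4 * (b + c * m ^ 2) * (b ^ 2 * (μ + c)) := by
      rw [hΔ, hA]; ring
    nlinarith [mul_pos hq (mul_pos (pow_pos hb 2) (by linarith : (0:ℝ) < μ + c)), hid]
  have hSlt : S < 2 * (b + c * m ^ 2) * lam - A := by
    nlinarith [hS2, hSnn, hB2, hBpos]
  have hlu : ustar < lam := by
    rw [hu, div_lt_iff₀ (by positivity : (0:ℝ) < 2 * (b + c * m ^ 2))]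
    nlinarith [hSlt]
  -- 0 < b - m * (lam - ustar)
  have hmS2 : (m * S) ^ 2 = m ^ 2 * Δ₁ := by rw [← hS2]; ring
  have hX2 : (2 * (b + c * m ^ 2) * (m * lam - b) - m * A) ^ 2 < m ^ 2 * Δ₁ := by
    have hid : m ^ 2 * Δ₁ - (2 * (b + c * m ^ 2) * (m * lam - b) - m * A) ^ 2
        = 4 * (b + c * m ^ 2) * (m * lam - b) * b ^ 2 := by
      rw [hΔ, hA]; ring
    nlinarith [mul_pos (mul_pos hq h1) (pow_pos hb 2), hid]
  have hmS : 2 * (b + c * m ^ 2) * (m * lam - b) - m * A < m * S := by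
    nlinarith [hX2, hmS2, mul_nonneg hm.le hSnn]
  have hmqu : 2 * (b + c * m ^ 2) * (m * ustar) = m * A + m * S := by
    linear_combination m * h2qu
  have hD : 0 < b - m * (lam - ustar) := by nlinarith [hmS, hmqu, hq]
  have hDne : b - m * (lam - ustar) ≠ 0 := ne_of_gt hD
  have hvpos : 0 < vstar := by
    rw [hv]; exact div_pos (mul_pos hupos (by linarith)) hD
  have hdpos : 0 < ustar + m * vstar := by positivity
  have hdne : ustar + m * vstar ≠ 0 := ne_of_gt hdpos
  have key : μ * b * (b - m * (lam - ustar)) - b * ustar * (lam - ustar)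
      + c * (b - m * (lam - ustar)) ^ 2 = 0 := by
    linear_combination hquad + ustar * hA
  have hsum : ustar + m * vstar = ustar * b / (b - m * (lam - ustar)) := by
    rw [hv]; field_simp; ring
  refine ⟨hupos, hD, hvpos, ?_, ?_⟩
  · have h3 : b - (lam - ustar) * m ≠ 0 := by rw [mul_comm]; exact hDne
    rw [hsum, hv]
    field_simp
    ring
  · rw [hsum, hv]
    have hbne : b ≠ 0 := ne_of_gt hb
    have hune : ustar ≠ 0 := ne_of_gt hupos
    have h3 : b - (lam - ustar) * m ≠ 0 := by rw [mul_comm]; exact hDne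
    field_simp
    linear_combination key
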